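/- Let H be a symmetric positive definite m × m real matrix with all eigenvalues λ_1, ..., λ_m in (0, 1), let T : ℝ^m → ℝ^m be nonexpansive with a fixed point v*, and let c = min_j λ_j(1 − λ_j) > 0. Define v^{k+1} = (I − H) v^k + H T(v^k) starting from any v^1. Then for every k ≥ 1, min_{j=1,...,k} ‖v^j − T(v^j)‖²_{H^{-1}} ≤ (1/(c k)) ‖v^1 − v*‖²_{H^{-1}}. -/

import Mathlib

open Matrix

/-- The weighted squared norm `‖v‖²_{H⁻¹} = vᵀ H⁻¹ v` associated with a symmetric positive
definite matrix `H`. -/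
noncomputable def wnormSq {m : ℕ} (H : Matrix (Fin m) (Fin m) ℝ)
    (v : EuclideanSpace ℝ (Fin m)) : ℝ :=
  inner ℝ v (Matrix.toEuclideanLin H⁻¹ v)

private lemma aux_psd {m : ℕ} (H : Matrix (Fin m) (Fin m) ℝ) (hH : H.PosDef)
    (heig : ∀ i, hH.1.eigenvalues i ∈ Set.Ioo (0:ℝ) 1)
    (c : ℝ) (hcle : ∀ i, c ≤ hH.1.eigenvalues i * (1 - hH.1.eigenvalues i)) :
    (1 - H - c • H⁻¹).PosSemidef := by
  set U : Matrix (Fin m) (Fin m) ℝ := (hH.1.eigenvectorUnitary : Matrix (Fin m) (Fin m) ℝ) with hU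
  set lam := hH.1.eigenvalues with hlam
  have hUU : U * Uᴴ = 1 := by
    simpa [Matrix.star_eq_conjTranspose] using
      (Matrix.mem_unitaryGroup_iff).mp hH.1.eigenvectorUnitary.2
  have hUU' : Uᴴ * U = 1 := by
    simpa [Matrix.star_eq_conjTranspose] using
      (Matrix.mem_unitaryGroup_iff').mp hH.1.eigenvectorUnitary.2
  have hspec : H = U * Matrix.diagonal lam * Uᴴ := by
    simpa [Matrix.star_eq_conjTranspose, Function.comp] using hH.1.spectral_theorem
  have hlne : ∀ i, lam i ≠ 0 := fun i => (heig i).1.ne'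
  have hinv : H⁻¹ = U * Matrix.diagonal (fun i => (lam i)⁻¹) * Uᴴ := by
    apply Matrix.inv_eq_right_inv
    rw [hspec]
    calc U * Matrix.diagonal lam * Uᴴ * (U * Matrix.diagonal (fun i => (lam i)⁻¹) * Uᴴ)
        = U * (Matrix.diagonal lam * (Uᴴ * U) * Matrix.diagonal (fun i => (lam i)⁻¹)) * Uᴴ := by
          simp only [Matrix.mul_assoc]
      _ = 1 := by
          rw [hUU', Matrix.mul_one, Matrix.diagonal_mul_diagonal]
          have h9 : (fun i => lam i * (lam i)⁻¹) = fun _ => (1:ℝ) :=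
            funext fun i => mul_inv_cancel₀ (hlne i)
          rw [h9, Matrix.diagonal_one, Matrix.mul_one, hUU]
  have hone : (1 : Matrix (Fin m) (Fin m) ℝ) = U * 1 * Uᴴ := by rw [Matrix.mul_one, hUU]
  have hM : 1 - H - c • H⁻¹
      = U * Matrix.diagonal (fun i => 1 - lam i - c * (lam i)⁻¹) * Uᴴ := by
    rw [hinv, hspec]
    nth_rewrite 1 [hone]
    rw [← Matrix.smul_mul, ← Matrix.mul_smul, ← Matrix.sub_mul, ← Matrix.mul_sub,
      ← Matrix.sub_mul, ← Matrix.mul_sub]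
    congr 2
    rw [← Matrix.diagonal_one, ← Matrix.diagonal_smul, ← Matrix.diagonal_sub, ← Matrix.diagonal_sub]
    simp [smul_eq_mul]
    rw [← Matrix.diagonal_smul]
    rfl
  rw [hM]
  apply Matrix.PosSemidef.mul_mul_conjTranspose_same
  refine Matrix.posSemidef_diagonal_iff.mpr fun i => ?_
  have h1 := (heig i).1
  have h2 := (heig i).2
  have h3 : c * (lam i)⁻¹ ≤ 1 - lam i := by
    rw [mul_inv_le_iff₀ h1]
    linarith [hcle i]
  linarith

/-- Let `H` be a symmetric positive definite `m × m` real matrix with all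
eigenvalues `λ_j ∈ (0,1)`, let `T` be nonexpansive with fixed point `v*`, and let
`c = min_j λ_j (1 − λ_j) > 0`.  For the iteration `v (k+1) = (I − H) v k + H T(v k)`
started from any `v 1`, one has for every `k ≥ 1`
`min_{j=1,…,k} ‖v^j − T v^j‖²_{H⁻¹} ≤ (1/(c k)) ‖v^1 − v*‖²_{H⁻¹}`. -/
theorem preconditioned_mann_min_residual {m : ℕ}
    (H : Matrix (Fin m) (Fin m) ℝ) (hH : H.PosDef)
    (heig : ∀ i, hH.1.eigenvalues i ∈ Set.Ioo (0:ℝ) 1)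
    (T : EuclideanSpace ℝ (Fin m) → EuclideanSpace ℝ (Fin m))
    (hT : ∀ x y, ‖T x - T y‖ ≤ ‖x - y‖)
    (vstar : EuclideanSpace ℝ (Fin m)) (hfix : T vstar = vstar)
    (c : ℝ)
    (hc : IsLeast (Set.range fun j => hH.1.eigenvalues j * (1 - hH.1.eigenvalues j)) c)
    (v : ℕ → EuclideanSpace ℝ (Fin m))
    (hrec : ∀ k, 1 ≤ k → v (k + 1) =
      (v k - Matrix.toEuclideanLin H (v k)) + Matrix.toEuclideanLin H (T (v k))) :
    ∀ k (hk : 1 ≤ k),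
      (Finset.Icc 1 k).inf' (Finset.nonempty_Icc.mpr hk)
          (fun j => wnormSq H (v j - T (v j))) ≤
        (1 / (c * k)) * wnormSq H (v 1 - vstar) := by
  -- basic facts
  have hdet : IsUnit H.det := hH.det_pos.ne'.isUnit
  have hcle : ∀ i, c ≤ hH.1.eigenvalues i * (1 - hH.1.eigenvalues i) :=
    fun i => hc.2 ⟨i, rfl⟩
  have hcpos : 0 < c := by
    obtain ⟨j, hj⟩ := hc.1
    have hj' : hH.1.eigenvalues j * (1 - hH.1.eigenvalues j) = c := hj
    have h1 := (heig j).1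
    have h2 := (heig j).2
    nlinarith
  -- quadratic form
  set Q : (Fin m → ℝ) → ℝ := fun x => x ⬝ᵥ H⁻¹ *ᵥ x with hQ
  have hwQ : ∀ x : EuclideanSpace ℝ (Fin m), wnormSq H x = Q (fun i => x i) := by
    intro x
    simp only [wnormSq, PiLp.inner_apply, RCLike.inner_apply, conj_trivial, hQ,
      dotProduct]
    exact Finset.sum_congr rfl fun i _ => mul_comm _ _
  have hdotinner : ∀ x y : EuclideanSpace ℝ (Fin m),
      (inner ℝ x y : ℝ) = (fun i => x i) ⬝ᵥ (fun i => y i) := by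
    intro x y
    simp only [PiLp.inner_apply, RCLike.inner_apply, conj_trivial, dotProduct]
    exact Finset.sum_congr rfl fun i _ => mul_comm _ _
  -- symmetry facts
  have hsymmdot : ∀ (A : Matrix (Fin m) (Fin m) ℝ), Aᵀ = A → ∀ x y : Fin m → ℝ,
      x ⬝ᵥ A *ᵥ y = y ⬝ᵥ A *ᵥ x := by
    intro A hA x y
    rw [Matrix.dotProduct_mulVec, ← Matrix.mulVec_transpose, hA, dotProduct_comm]
  have hHsymm : Hᵀ = H := by
    have h := hH.1; rwa [Matrix.IsHermitian, Matrix.conjTranspose_eq_transpose_of_trivial] at h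
  have hHinvsymm : (H⁻¹)ᵀ = H⁻¹ := by
    rw [Matrix.transpose_nonsing_inv, hHsymm]
  -- sequences of coordinate vectors
  set a : ℕ → (Fin m → ℝ) := fun k i => v k i - vstar i with ha
  set r : ℕ → (Fin m → ℝ) := fun k i => v k i - T (v k) i with hr
  -- key eigenvalue inequality
  have key : ∀ x : Fin m → ℝ, c * Q x ≤ x ⬝ᵥ x - x ⬝ᵥ H *ᵥ x := by
    intro x
    have h0 := (aux_psd H hH heig c hcle).dotProduct_mulVec_nonneg x
    have h1 : (0:ℝ) ≤ x ⬝ᵥ (1 - H - c • H⁻¹) *ᵥ x := by simpa using h0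
    rw [Matrix.sub_mulVec, Matrix.sub_mulVec, Matrix.one_mulVec,
      Matrix.smul_mulVec, dotProduct_sub, dotProduct_sub,
      dotProduct_smul] at h1
    simp only [smul_eq_mul] at h1
    linarith
  -- nonnegativity of Q
  have hQnonneg : ∀ x, 0 ≤ Q x := fun x => by
    simpa using hH.inv.posSemidef.re_dotProduct_nonneg x
  -- recurrence in coordinates
  have hrec' : ∀ k, 1 ≤ k → a (k + 1) = a k - H *ᵥ r k := by
    intro k hk
    funext i
    have hsplit : (H *ᵥ r k) i
        = (H *ᵥ fun j => v k j) i - (H *ᵥ fun j => T (v k) j) i := by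
      rw [show r k = (fun j => v k j) - (fun j => T (v k) j) from rfl, Matrix.mulVec_sub]
      rfl
    have hv : v (k+1) i = v k i - (H *ᵥ fun j => v k j) i + (H *ᵥ fun j => T (v k) j) i := by
      rw [hrec k hk]; rfl
    show v (k+1) i - vstar i = (v k i - vstar i) - (H *ᵥ r k) i
    rw [hv, hsplit]
    ring
  -- nonexpansiveness inequality
  have hge : ∀ k, (r k) ⬝ᵥ (r k) ≤ 2 * ((a k) ⬝ᵥ (r k)) := by
    intro k
    set A : EuclideanSpace ℝ (Fin m) := v k - vstar with hA
    set R : EuclideanSpace ℝ (Fin m) := v k - T (v k) with hR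
    have hAR : T (v k) - vstar = A - R := by rw [hA, hR]; abel
    have hn : ‖A - R‖ ≤ ‖A‖ := by
      rw [← hAR, hA]
      simpa [hfix] using hT (v k) vstar
    have hsq : ‖A - R‖ ^ 2 ≤ ‖A‖ ^ 2 := by
      have := norm_nonneg (A - R)
      nlinarith
    have hexp : ‖A - R‖ ^ 2 = ‖A‖ ^ 2 - 2 * (inner ℝ A R : ℝ) + ‖R‖ ^ 2 :=
      norm_sub_sq_real A R
    have h2 : ‖R‖ ^ 2 ≤ 2 * (inner ℝ A R : ℝ) := by linarith
    have hRn : ‖R‖ ^ 2 = (r k) ⬝ᵥ (r k) := by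
      rw [← real_inner_self_eq_norm_sq, hdotinner]
      rfl
    have hARd : (inner ℝ A R : ℝ) = (a k) ⬝ᵥ (r k) := by
      rw [hdotinner]
      rfl
    rw [← hRn, ← hARd]
    exact h2
  -- descent inequality
  have descent : ∀ k, 1 ≤ k → Q (a (k + 1)) + c * Q (r k) ≤ Q (a k) := by
    intro k hk
    set x := a k
    set y := r k
    have hinvH : H⁻¹ *ᵥ (H *ᵥ y) = y := by
      rw [Matrix.mulVec_mulVec, Matrix.nonsing_inv_mul H hdet, Matrix.one_mulVec]
    have hexp : Q (x - H *ᵥ y) = Q x - 2 * (x ⬝ᵥ y) + y ⬝ᵥ H *ᵥ y := by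
      have e1 : H⁻¹ *ᵥ (x - H *ᵥ y) = H⁻¹ *ᵥ x - y := by
        rw [Matrix.mulVec_sub, hinvH]
      have e2 : (H *ᵥ y) ⬝ᵥ (H⁻¹ *ᵥ x) = x ⬝ᵥ y :=
        calc (H *ᵥ y) ⬝ᵥ (H⁻¹ *ᵥ x) = (H⁻¹ *ᵥ x) ⬝ᵥ (H *ᵥ y) := dotProduct_comm _ _
          _ = y ⬝ᵥ (H *ᵥ (H⁻¹ *ᵥ x)) := hsymmdot H hHsymm _ y
          _ = y ⬝ᵥ x := by
              rw [Matrix.mulVec_mulVec, Matrix.mul_nonsing_inv H hdet, Matrix.one_mulVec]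
          _ = x ⬝ᵥ y := dotProduct_comm _ _
      have e3 : (H *ᵥ y) ⬝ᵥ y = y ⬝ᵥ H *ᵥ y := by rw [dotProduct_comm]
      have e4 : x ⬝ᵥ y = y ⬝ᵥ x := dotProduct_comm x y
      simp only [hQ, e1, sub_dotProduct, dotProduct_sub]
      rw [e2, e3]
      ring
    have hx1 := key y
    have hx2 := hge k
    rw [hrec' k hk, hexp]
    linarith
  -- telescoping sum
  have telescope : ∀ k, 1 ≤ k →
      c * ∑ j ∈ Finset.Icc 1 k, Q (r j) + Q (a (k + 1)) ≤ Q (a 1) := by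
    intro k hk
    induction k, hk using Nat.le_induction with
    | base =>
      have h := descent 1 le_rfl
      simp only [Finset.Icc_self, Finset.sum_singleton]
      linarith
    | succ n hn ih =>
      rw [Finset.sum_Icc_succ_top (by omega : 1 ≤ n + 1)]
      have := descent (n + 1) (by omega)
      have hQn := hQnonneg (a (n + 2))
      nlinarith
  -- conclude
  intro k hk
  set F : ℕ → ℝ := fun j => wnormSq H (v j - T (v j)) with hF
  have hFQ : ∀ j, F j = Q (r j) := by
    intro j
    show wnormSq H (v j - T (v j)) = Q (r j)
    rw [hwQ]
    rfl
  set M := (Finset.Icc 1 k).inf' (Finset.nonempty_Icc.mpr hk) F with hM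
  have hMle : ∀ j ∈ Finset.Icc 1 k, M ≤ Q (r j) := by
    intro j hj
    rw [← hFQ]
    exact Finset.inf'_le F hj
  have hcard : (Finset.Icc 1 k).card = k := by
    rw [Nat.card_Icc]; omega
  have hsum : (k : ℝ) * M ≤ ∑ j ∈ Finset.Icc 1 k, Q (r j) := by
    have := Finset.card_nsmul_le_sum (Finset.Icc 1 k) (fun j => Q (r j)) M hMle
    rwa [hcard, nsmul_eq_mul] at this
  have htel := telescope k hk
  have hQa := hQnonneg (a (k + 1))
  have hkpos : (0:ℝ) < k := by exact_mod_cast hk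
  have hck : 0 < c * k := by positivity
  have hfinal : c * ((k : ℝ) * M) ≤ Q (a 1) := by
    have h1 : c * ((k:ℝ) * M) ≤ c * ∑ j ∈ Finset.Icc 1 k, Q (r j) :=
      mul_le_mul_of_nonneg_left hsum hcpos.le
    linarith
  have hQa1 : wnormSq H (v 1 - vstar) = Q (a 1) := by
    rw [hwQ]; rfl
  rw [hQa1, one_div, inv_mul_eq_div, le_div_iff₀ hck]
  nlinarith
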